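/- Let v_1,...,v_N be pairwise distinct elements of a field. Define the lower triangular N×N Stanley matrix A with entries A_{k,l} = a_{k−l} for k ≥ l and 0 otherwise, where a_0 = 1 and a_j = (−1)^j σ_{N,j} (the j-th elementary symmetric polynomial of v_1,...,v_N). Define W to be the N×N matrix with W_{i,j} = v_i^{N−j} / λ_i where λ_i = ∏_{k≠i}(v_i − v_k). Then V^{-1} = W·A, where V is the Vandermonde matrix with V_{k,j} = v_j^{k-1}. -/
import Mathlib

open Matrix Polynomial

/-- `esymm v j`: the `j`-th elementary symmetric polynomial in `v`. -/
def esymm {K : Type*} [Field K] {N : ℕ} (v : Fin N → K) (j : ℕ) : K :=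
  ∑ t ∈ Finset.univ.powersetCard j, ∏ k ∈ t, v k

section Aux

variable {K : Type*} [Field K] {N : ℕ}

/-- coefficients of the characteristic product -/
private def aa (v : Fin N → K) (m : ℕ) : K := (-1) ^ m * esymm v m

/-- truncated polynomials -/
private noncomputable def SS (v : Fin N → K) (j : ℕ) : K[X] :=
  ∑ l ∈ Finset.range (j + 1), C (aa v (j - l)) * X ^ l

private lemma aa_zero (v : Fin N → K) : aa v 0 = 1 := by
  simp [aa, esymm]

private lemma SS_zero (v : Fin N → K) : SS v 0 = 1 := by
  simp [SS, aa_zero]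

private lemma SS_succ (v : Fin N → K) (j : ℕ) :
    SS v (j + 1) = X * SS v j + C (aa v (j + 1)) := by
  rw [SS, Finset.sum_range_succ', SS, Finset.mul_sum]
  simp only [Nat.succ_sub_succ_eq_sub, Nat.sub_zero, pow_zero, mul_one]
  congr 1
  exact Finset.sum_congr rfl fun l _ => by ring

private lemma SS_eq_prod (v : Fin N → K) : SS v N = ∏ k, (X - C (v k)) := by
  have h := Multiset.prod_X_sub_X_eq_sum_esymm ((Finset.univ.val.map v) : Multiset K)
  have hcard : Multiset.card (Finset.univ.val.map v) = N := by
    simp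
  have hes : ∀ j, (Finset.univ.val.map v).esymm j = esymm v j := fun j =>
    (Finset.esymm_map_val v Finset.univ j).trans rfl
  have hprod : ((Finset.univ.val.map v).map fun t => X - C t).prod
      = ∏ k, (X - C (v k)) := by
    rw [Multiset.map_map, Finset.prod]
    rfl
  rw [hprod, hcard] at h
  simp only [hes] at h
  rw [SS, ← Finset.sum_range_reflect, h]
  refine Finset.sum_congr rfl fun j hj => ?_
  have hj' : j ≤ N := Nat.lt_succ_iff.mp (Finset.mem_range.mp hj)
  have h1 : N + 1 - 1 - j = N - j := by omega
  have h2 : N - (N - j) = j := by omega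
  rw [h1, h2, aa, C_mul]
  have : (C ((-1:K) ^ j) : K[X]) = (-1) ^ j := by
    simp
  rw [this]
  ring

private lemma key (v : Fin N → K) (x : K) :
    (X - C x) * ∑ j ∈ Finset.range N, C (x ^ (N - 1 - j)) * SS v j
      = SS v N - C (eval x (SS v N)) := by
  have hconst : eval x (SS v N)
      = x ^ N + ∑ j ∈ Finset.range N, aa v (j + 1) * x ^ (N - 1 - j) := by
    rw [SS, eval_finset_sum]
    simp only [eval_mul, eval_C, eval_pow, eval_X]
    rw [Finset.sum_range_succ, Nat.sub_self, aa_zero, one_mul, add_comm,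
      ← Finset.sum_range_reflect]
    congr 1
    refine Finset.sum_congr rfl fun j hj => ?_
    have hj' : j < N := Finset.mem_range.mp hj
    have h1 : N - (N - 1 - j) = j + 1 := by omega
    rw [h1]
  have hterm : ∀ j ∈ Finset.range N,
      (X - C x) * (C (x ^ (N - 1 - j)) * SS v j)
        = (C (x ^ (N - (j + 1))) * SS v (j + 1) - C (x ^ (N - j)) * SS v j)
            - C (aa v (j + 1) * x ^ (N - 1 - j)) := by
    intro j hj
    have hj' : j < N := Finset.mem_range.mp hj
    have h1 : N - (j + 1) = N - 1 - j := by omega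
    have h2 : x ^ (N - j) = x ^ (N - 1 - j) * x := by
      rw [← pow_succ]; congr 1; omega
    rw [SS_succ, h1, h2, C_mul, C_mul]
    ring
  rw [Finset.mul_sum, Finset.sum_congr rfl hterm, Finset.sum_sub_distrib,
    Finset.sum_range_sub (fun j => C (x ^ (N - j)) * SS v j)]
  simp only [Nat.sub_self, Nat.sub_zero, pow_zero, Polynomial.C_1, one_mul, SS_zero, mul_one]
  rw [hconst, map_add, map_sum]
  ring

private lemma Q_eq (v : Fin N → K) (i : Fin N) :
    ∑ j ∈ Finset.range N, C (v i ^ (N - 1 - j)) * SS v j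
      = ∏ k ∈ Finset.univ.erase i, (X - C (v k)) := by
  have h0 : eval (v i) (SS v N) = 0 := by
    rw [SS_eq_prod, eval_prod]
    exact Finset.prod_eq_zero (Finset.mem_univ i) (by simp)
  have hk := key v (v i)
  rw [h0, map_zero, sub_zero, SS_eq_prod,
    ← Finset.mul_prod_erase _ _ (Finset.mem_univ i)] at hk
  exact mul_left_cancel₀ (X_sub_C_ne_zero (v i)) hk

end Aux

/-- The Vandermonde inverse factorization `V⁻¹ = W·A` (with
`V_{k,j} = v_j^{k-1}`, the Stanley matrix `A` with entries `a_{k−l}`,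
`a_m = (−1)^m σ_{N,m}`, and `W_{i,j} = vᵢ^{N−j}/λᵢ`; all 0-based). -/
theorem inverse_vandermonde_factorization {K : Type*} [Field K] (N : ℕ)
    (v : Fin N → K) (hv : Function.Injective v)
    (A W : Matrix (Fin N) (Fin N) K)
    (hA : ∀ k l : Fin N, A k l =
      if (l : ℕ) ≤ (k : ℕ) then (-1 : K) ^ ((k : ℕ) - (l : ℕ)) * esymm v ((k : ℕ) - (l : ℕ)) else 0)
    (hW : ∀ i j : Fin N, W i j =
      v i ^ (N - 1 - (j : ℕ)) / ∏ k ∈ Finset.univ.erase i, (v i - v k)) :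
    ((Matrix.vandermonde v)ᵀ)⁻¹ = W * A := by
  have hlam : ∀ i : Fin N, (∏ k ∈ Finset.univ.erase i, (v i - v k)) ≠ 0 := fun i =>
    Finset.prod_ne_zero_iff.mpr fun k hk =>
      sub_ne_zero.mpr fun h => (Finset.mem_erase.mp hk).1 (hv h).symm
  apply Matrix.inv_eq_left_inv
  ext i m
  rw [Matrix.mul_apply]
  simp only [Matrix.mul_apply, Matrix.transpose_apply, Matrix.vandermonde_apply,
    Finset.sum_mul]
  rw [Finset.sum_comm]
  have hinner : ∀ j : Fin N, ∑ l : Fin N, W i j * A j l * v m ^ (l : ℕ)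
      = W i j * eval (v m) (SS v (j : ℕ)) := by
    intro j
    simp only [mul_assoc, ← Finset.mul_sum]
    congr 1
    calc ∑ l : Fin N, A j l * v m ^ (l : ℕ)
        = ∑ l ∈ Finset.range N, (if l ≤ (j : ℕ)
            then (-1 : K) ^ ((j : ℕ) - l) * esymm v ((j : ℕ) - l) else 0) * v m ^ l := by
          rw [← Fin.sum_univ_eq_sum_range
            (fun l => (if l ≤ (j : ℕ)
              then (-1 : K) ^ ((j : ℕ) - l) * esymm v ((j : ℕ) - l) else 0) * v m ^ l)]
          exact Finset.sum_congr rfl fun l _ => by rw [hA]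
      _ = ∑ l ∈ Finset.range ((j : ℕ) + 1), (if l ≤ (j : ℕ)
            then (-1 : K) ^ ((j : ℕ) - l) * esymm v ((j : ℕ) - l) else 0) * v m ^ l := by
          refine (Finset.sum_subset (Finset.range_subset_range.mpr j.isLt) ?_).symm
          intro l _ hl
          rw [if_neg fun hle => hl (Finset.mem_range.mpr (Nat.lt_succ_of_le hle)), zero_mul]
      _ = eval (v m) (SS v (j : ℕ)) := by
          rw [SS, eval_finset_sum]
          refine Finset.sum_congr rfl fun l hl => ?_
          rw [if_pos (Nat.lt_succ_iff.mp (Finset.mem_range.mp hl))]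
          simp [aa]
  rw [Finset.sum_congr rfl fun j _ => hinner j]
  simp only [hW]
  have : ∑ j : Fin N, v i ^ (N - 1 - (j : ℕ)) / (∏ k ∈ Finset.univ.erase i, (v i - v k))
        * eval (v m) (SS v (j : ℕ))
      = (∏ k ∈ Finset.univ.erase i, (v m - v k))
        / ∏ k ∈ Finset.univ.erase i, (v i - v k) := by
    simp only [div_mul_eq_mul_div, ← Finset.sum_div]
    congr 1
    calc ∑ j : Fin N, v i ^ (N - 1 - (j : ℕ)) * eval (v m) (SS v (j : ℕ))
        = eval (v m) (∑ j ∈ Finset.range N, C (v i ^ (N - 1 - j)) * SS v j) := by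
          rw [eval_finset_sum, ← Fin.sum_univ_eq_sum_range
            (fun j => eval (v m) (C (v i ^ (N - 1 - j)) * SS v j))]
          exact Finset.sum_congr rfl fun j _ => by rw [eval_mul, eval_C]
      _ = ∏ k ∈ Finset.univ.erase i, (v m - v k) := by
          rw [Q_eq v i, eval_prod]
          exact Finset.prod_congr rfl fun k _ => by rw [eval_sub, eval_X, eval_C]
  rw [this, Matrix.one_apply]
  by_cases h : i = m
  · subst h
    rw [if_pos rfl, div_self (hlam i)]
  · rw [if_neg h, _root_.div_eq_zero_iff]
    exact Or.inl (Finset.prod_eq_zero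
      (Finset.mem_erase.mpr ⟨fun hmi => h hmi.symm, Finset.mem_univ m⟩) (sub_self (v m)))
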